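/- (Extended skew-product semiconjugation) With $A$, $\Sigma_A$, $\pi$ as in the orientation-doubling construction, define fiber maps $g_i=f_i$ and $g_{i+N}=R\circ f_i\circ R$ for $i\in\mathcal I_P$, and $g_i=R\circ f_i$ and $g_{i+N}=f_i\circ R$ for $i\in\mathcal I_R$, where $R(x)=1-x$, and set $G(\omega,x)=(\sigma_A\omega,g_{\omega_0}(x))$. Let $C=\{\omega\in\Sigma_A:\omega_0\le N\}$ and define $\Pi(\omega,x)=(\bar\omega,x)$ if $\omega\in C$ and $(\bar\omega,R(x))$ otherwise, where $\bar\omega=\pi(\omega)$. Then $\Pi$ is a continuous surjective two-to-one map satisfying $\Pi\circ G=F\circ\Pi$. -/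

import Mathlib

open Set Filter MeasureTheory Topology

noncomputable section

/-- The base space `Σ_N = {1,…,N}^ℤ`. -/
abbrev BSeq (N : ℕ) := ℤ → Fin N

/-- The shift map on bilateral sequences. -/
def shiftSeq {α : Type*} (ξ : ℤ → α) : ℤ → α := fun n => ξ (n + 1)

/-- The unit interval. -/
def I01 : Set ℝ := Set.Icc 0 1

/-- Forward composition of fiber maps: `fw h ξ n = h (ξ (n-1)) ∘ ⋯ ∘ h (ξ 0)`. -/
def fw {α : Type*} (h : α → ℝ → ℝ) (ξ : ℤ → α) : ℕ → ℝ → ℝ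
  | 0 => id
  | n + 1 => fun p => h (ξ (n : ℤ)) (fw h ξ n p)

/-- The step skew-product `F(ξ,p) = (σξ, f_{ξ₀}(p))`. -/
def Fmap {N : ℕ} (f : Fin N → ℝ → ℝ) (z : BSeq N × ℝ) : BSeq N × ℝ :=
  (shiftSeq z.1, f (z.1 0) z.2)


/-- Doubled symbol set `{1,…,2N}`: `(i, false)` is `i`, `(i, true)` is `i + N`. -/
abbrev DSym (N : ℕ) := Fin N × Bool

/-- `A`-admissibility for the orientation-doubling transition matrix, where
`part i = true` iff `f i` is orientation preserving. -/
def Admissible {N : ℕ} (part : Fin N → Bool) (ω : ℤ → DSym N) : Prop :=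
  ∀ n : ℤ, (ω (n + 1)).2 = xor ((ω n).2) (!(part (ω n).1))

/-- The subshift of finite type `Σ_A` of `A`-admissible bilateral sequences. -/
abbrev SigmaA (N : ℕ) (part : Fin N → Bool) := {ω : ℤ → DSym N // Admissible part ω}

/-- The shift map `σ_A` on `Σ_A`. -/
def shiftA {N : ℕ} {part : Fin N → Bool} (ω : SigmaA N part) : SigmaA N part :=
  ⟨shiftSeq ω.1, fun n => ω.2 (n + 1)⟩

/-- The 2-to-1 projection `π : Σ_A → Σ_N`, `π(ω)_n = ω_n mod N`. -/
def piA {N : ℕ} {part : Fin N → Bool} (ω : SigmaA N part) : BSeq N :=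
  fun n => (ω.1 n).1

/-- The reflection `R(x) = 1 - x`. -/
def R : ℝ → ℝ := fun x => 1 - x

/-- The fiber maps of the extended step skew-product:
`g_i = f_i`, `g_{i+N} = R∘f_i∘R` for orientation-preserving `f_i`, and
`g_i = R∘f_i`, `g_{i+N} = f_i∘R` for orientation-reversing `f_i`. -/
def gmap {N : ℕ} (f : Fin N → ℝ → ℝ) (part : Fin N → Bool) : DSym N → ℝ → ℝ :=
  fun s =>
    if part s.1 then (if s.2 then R ∘ f s.1 ∘ R else f s.1)
    else (if s.2 then f s.1 ∘ R else R ∘ f s.1)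

/-- The extended step skew-product `G(ω,x) = (σ_A ω, g_{ω₀}(x))`. -/
def Gmap {N : ℕ} {part : Fin N → Bool} (f : Fin N → ℝ → ℝ)
    (z : SigmaA N part × ℝ) : SigmaA N part × ℝ :=
  (shiftA z.1, gmap f part (z.1.1 0) z.2)

/-- The 2-to-1 projection `Π : Σ_A × I → Σ_N × I`. -/
def PiMap {N : ℕ} {part : Fin N → Bool} (z : SigmaA N part × ℝ) : BSeq N × ℝ :=
  (piA z.1, if (z.1.1 0).2 then R z.2 else z.2)

/-- Orientation hypothesis: `part` records which fiber maps preserve orientation. -/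
def OrientPart {N : ℕ} (f : Fin N → ℝ → ℝ) (part : Fin N → Bool) : Prop :=
  ∀ i, (part i = true → StrictMonoOn (f i) I01) ∧ (part i = false → StrictAntiOn (f i) I01)

/-- Positive-index part of the admissible bit sequence. -/
def bpos (t : ℤ → Bool) : ℕ → Bool
  | 0 => false
  | k+1 => xor (bpos t k) (t k)

/-- Negative-index part of the admissible bit sequence. -/
def bneg (t : ℤ → Bool) : ℕ → Bool
  | 0 => t (-1)
  | k+1 => xor (bneg t k) (t (Int.negSucc (k+1)))

/-- The bit sequence with `bseq 0 = false` and `bseq (n+1) = xor (bseq n) (t n)`. -/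
def bseq (t : ℤ → Bool) : ℤ → Bool
  | Int.ofNat k => bpos t k
  | Int.negSucc k => bneg t k

lemma bseq_zero (t : ℤ → Bool) : bseq t 0 = false := rfl

lemma not_xor' (a b : Bool) : (!(xor a b)) = xor (!a) b := by cases a <;> cases b <;> rfl

lemma xor_right_cancel' {a a' c : Bool} (h : xor a c = xor a' c) : a = a' := by
  cases a <;> cases a' <;> cases c <;> simp_all

lemma bseq_step (t : ℤ → Bool) (n : ℤ) : bseq t (n + 1) = xor (bseq t n) (t n) := by
  cases n with
  | ofNat k =>
      show bseq t (Int.ofNat (k+1)) = xor (bseq t (Int.ofNat k)) (t (Int.ofNat k))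
      rfl
  | negSucc k =>
      cases k with
      | zero =>
          show bseq t 0 = xor (bseq t (Int.negSucc 0)) (t (Int.negSucc 0))
          show false = xor (bneg t 0) (t (-1))
          show false = xor (t (-1)) (t (-1))
          cases t (-1) <;> rfl
      | succ j =>
          show bseq t (Int.negSucc j) = xor (bseq t (Int.negSucc (j+1))) (t (Int.negSucc (j+1)))
          show bneg t j = xor (bneg t (j+1)) (t (Int.negSucc (j+1)))
          show bneg t j = xor (xor (bneg t j) (t (Int.negSucc (j+1)))) (t (Int.negSucc (j+1)))
          cases bneg t j <;> cases t (Int.negSucc (j+1)) <;> rfl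

lemma step_unique {t b b' : ℤ → Bool}
    (hb : ∀ n : ℤ, b (n + 1) = xor (b n) (t n))
    (hb' : ∀ n : ℤ, b' (n + 1) = xor (b' n) (t n))
    (h0 : b 0 = b' 0) : ∀ n : ℤ, b n = b' n := by
  intro n
  induction n using Int.induction_on with
  | zero => exact h0
  | succ k ih => rw [hb, hb', ih]
  | pred k ih =>
      have e : (-(k : ℤ) - 1) + 1 = -k := by ring
      have h1 := hb (-(k : ℤ) - 1)
      have h2 := hb' (-(k : ℤ) - 1)
      rw [e] at h1 h2
      exact xor_right_cancel' (h1.symm.trans (ih.trans h2))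

lemma R_mem {x : ℝ} (hx : x ∈ I01) : R x ∈ I01 := by
  simp only [I01, Set.mem_Icc, R] at *
  constructor <;> linarith [hx.1, hx.2]

lemma R_R (x : ℝ) : R (R x) = x := by simp [R]

/-- **Lemma (extended skew-product semiconjugation).** `Π` is a continuous surjective
two-to-one map with `Π ∘ G = F ∘ Π`; all fiber maps of `G` preserve orientation. -/
theorem PiMap_two_to_one_semiconjugation {N : ℕ} (f : Fin N → ℝ → ℝ)
    (part : Fin N → Bool) (hor : OrientPart f part)
    (hinj : ∀ i, Set.InjOn (f i) I01)
    (hmap : ∀ i, Set.MapsTo (f i) I01 I01) :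
    Continuous (PiMap (N := N) (part := part)) ∧
    Function.Surjective (PiMap (N := N) (part := part)) ∧
    (∀ z : BSeq N × ℝ, ∃ w₁ w₂ : SigmaA N part × ℝ, w₁ ≠ w₂ ∧
      PiMap (N := N) (part := part) ⁻¹' {z} = {w₁, w₂}) ∧
    (∀ w : SigmaA N part × ℝ, PiMap (Gmap f w) = Fmap f (PiMap w)) ∧
    (∀ s : DSym N, StrictMonoOn (gmap f part s) I01) := by

  refine ⟨?_, ?_, ?_, ?_, ?_⟩
  · -- continuity
    apply Continuous.prodMk
    · exact continuous_pi fun n =>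
        continuous_fst.comp ((continuous_apply n).comp (continuous_subtype_val.comp continuous_fst))
    · have hb : Continuous fun z : SigmaA N part × ℝ => (z.1.1 0).2 :=
        continuous_snd.comp ((continuous_apply 0).comp (continuous_subtype_val.comp continuous_fst))
      have key : (fun z : SigmaA N part × ℝ => if (z.1.1 0).2 then R z.2 else z.2)
          = fun z => (if (z.1.1 0).2 then (1:ℝ) else 0) + (if (z.1.1 0).2 then (-1:ℝ) else 1) * z.2 := by
        funext z
        by_cases h : (z.1.1 0).2 <;> simp [h, R] <;> ring
      rw [key]
      have c1 : Continuous fun z : SigmaA N part × ℝ => (if (z.1.1 0).2 then (1:ℝ) else 0) :=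
        (continuous_of_discreteTopology (f := fun b : Bool => if b then (1:ℝ) else 0)).comp hb
      have c2 : Continuous fun z : SigmaA N part × ℝ => (if (z.1.1 0).2 then (-1:ℝ) else 1) :=
        (continuous_of_discreteTopology (f := fun b : Bool => if b then (-1:ℝ) else 1)).comp hb
      exact c1.add (c2.mul continuous_snd)
  · -- surjectivity
    rintro ⟨ξ, x⟩
    exact ⟨(⟨fun n => (ξ n, bseq (fun m => !part (ξ m)) n), fun n => bseq_step _ n⟩, x), rfl⟩
  · -- two-to-one
    rintro ⟨ξ, x⟩
    set t : ℤ → Bool := fun m => !part (ξ m) with ht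
    have adm1 : Admissible part (fun n => (ξ n, bseq t n)) := fun n => bseq_step _ n
    have adm2 : Admissible part (fun n => (ξ n, !bseq t n)) := fun n => by
      show (!bseq t (n+1)) = xor (!bseq t n) (t n)
      rw [bseq_step, not_xor']
    refine ⟨(⟨fun n => (ξ n, bseq t n), adm1⟩, x), (⟨fun n => (ξ n, !bseq t n), adm2⟩, R x), ?_, ?_⟩
    · intro h
      have := congrArg (fun w : SigmaA N part × ℝ => (w.1.1 0).2) h
      simp only [bseq_zero] at this
      exact Bool.false_ne_true (this.trans rfl)
    · ext w
      simp only [Set.mem_preimage, Set.mem_singleton_iff, Set.mem_insert_iff]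
      constructor
      · intro hw
        have h1 : piA w.1 = ξ := congrArg Prod.fst hw
        have h2 : (if (w.1.1 0).2 then R w.2 else w.2) = x := congrArg Prod.snd hw
        have hξ : ∀ n, (w.1.1 n).1 = ξ n := fun n => congrFun h1 n
        have hbstep : ∀ n : ℤ, (w.1.1 (n+1)).2 = xor ((w.1.1 n).2) (t n) := by
          intro n
          have := w.1.2 n
          rw [this, hξ n]
        cases h0 : (w.1.1 0).2 with
        | false =>
            left
            have huniq : ∀ n, (w.1.1 n).2 = bseq t n :=
              step_unique hbstep (fun n => bseq_step t n) (by rw [h0, bseq_zero])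
            have hfst : w.1 = (⟨fun n => (ξ n, bseq t n), adm1⟩ : SigmaA N part) :=
              Subtype.ext (funext fun n => Prod.ext (hξ n) (huniq n))
            have hsnd : w.2 = x := by rw [h0] at h2; simpa using h2
            exact Prod.ext hfst hsnd
        | true =>
            right
            have hb'step : ∀ n : ℤ, (!bseq t (n+1)) = xor (!bseq t n) (t n) := fun n => by
              rw [bseq_step, not_xor']
            have huniq : ∀ n, (w.1.1 n).2 = !bseq t n :=
              step_unique hbstep hb'step (by rw [h0, bseq_zero]; rfl)
            have hfst : w.1 = (⟨fun n => (ξ n, !bseq t n), adm2⟩ : SigmaA N part) :=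
              Subtype.ext (funext fun n => Prod.ext (hξ n) (huniq n))
            have hsnd : w.2 = R x := by
              rw [h0] at h2
              simp only [if_true] at h2
              rw [← h2, R_R]
            exact Prod.ext hfst hsnd
      · rintro (rfl | rfl)
        · rfl
        · exact Prod.ext rfl (R_R x)
  · -- semiconjugacy
    intro w
    have hadm := w.1.2 0
    simp only [zero_add] at hadm
    refine Prod.ext rfl ?_
    show (if ((shiftA w.1).1 0).2 then R (gmap f part (w.1.1 0) w.2) else gmap f part (w.1.1 0) w.2)
        = f ((piA w.1) 0) (if (w.1.1 0).2 then R w.2 else w.2)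
    show (if (w.1.1 (0+1)).2 then R (gmap f part (w.1.1 0) w.2) else gmap f part (w.1.1 0) w.2)
        = f ((w.1.1 0).1) (if (w.1.1 0).2 then R w.2 else w.2)
    simp only [zero_add, hadm]
    cases hp : part (w.1.1 0).1 <;> cases hb : (w.1.1 0).2 <;>
      simp [gmap, hp, hb, R, Function.comp]
  · -- orientation
    rintro ⟨i, b⟩
    cases hp : part i with
    | true =>
        have hm := (hor i).1 hp
        cases b with
        | false =>
            intro x hx y hy hxy
            simpa [gmap, hp] using hm hx hy hxy
        | true =>
            intro x hx y hy hxy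
            have hR : R y < R x := by simp [R]; linarith
            have := hm (R_mem hy) (R_mem hx) hR
            simp only [gmap, hp, if_true, Function.comp]
            simp only [R] at this ⊢
            linarith
    | false =>
        have hm := (hor i).2 hp
        cases b with
        | false =>
            intro x hx y hy hxy
            have := hm hx hy hxy
            simp only [gmap, hp, Bool.false_eq_true, if_false, Function.comp]
            simp [R]
            linarith
        | true =>
            intro x hx y hy hxy
            have hR : R y < R x := by simp [R]; linarith
            have := hm (R_mem hy) (R_mem hx) hR
            simpa [gmap, hp, Function.comp] using this
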